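/- For k ∈ ℕ, let φ_k be the automorphism of F₄ = ⟨a,b,c,d⟩ given by a↦a, b↦ba, c↦ca^{k+1}, d↦dc. If φ_k^p is conjugate in Aut(F₄) to φ_{k'}^{p'} (for k, k', p, p' ∈ ℕ, p, p' ≥ 1), then k = k' and p = p'. -/

import Mathlib

namespace Stmt10

abbrev F4 := FreeGroup (Fin 4)

def a : F4 := FreeGroup.of 0
def b : F4 := FreeGroup.of 1
def c : F4 := FreeGroup.of 2
def d : F4 := FreeGroup.of 3

open Matrix

abbrev V4 := Fin 4 → ℤ

def eHom : F4 →* Multiplicative V4 := FreeGroup.lift fun i => Multiplicative.ofAdd (Pi.single i 1)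

def vec (x : F4) : V4 := Multiplicative.toAdd (eHom x)

lemma vec_of (i : Fin 4) : vec (FreeGroup.of i) = Pi.single i 1 := by
  simp [vec, eHom]

lemma vec_mul (x y : F4) : vec (x * y) = vec x + vec y := by
  simp [vec]

lemma vec_pow (x : F4) (n : ℕ) : vec (x ^ n) = n • vec x := by
  simp [vec]

def mat (α : MulAut F4) : Matrix (Fin 4) (Fin 4) ℤ :=
  Matrix.of fun i j => vec (α (FreeGroup.of j)) i

lemma vec_apply (α : MulAut F4) (x : F4) : vec (α x) = (mat α).mulVec (vec x) := by
  have key : eHom.comp α.toMonoidHom =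
      ((AddMonoidHom.toMultiplicative ((mat α).mulVecLin.toAddMonoidHom)).comp eHom) := by
    apply FreeGroup.ext_hom
    intro i
    apply Multiplicative.toAdd.injective
    show vec (α (FreeGroup.of i)) = (mat α).mulVecLin (vec (FreeGroup.of i))
    rw [vec_of]
    simp only [Matrix.mulVecLin_apply, Matrix.mulVec_single, mul_one]
    ext j
    simp [mat, Matrix.col]
  exact congrArg Multiplicative.toAdd (DFunLike.congr_fun key x)

lemma mat_mul (α β : MulAut F4) : mat (α * β) = mat α * mat β := by
  ext i j
  show vec ((α * β) (FreeGroup.of j)) i = _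
  have : (α * β) (FreeGroup.of j) = α (β (FreeGroup.of j)) := rfl
  rw [this, vec_apply]
  simp [Matrix.mul_apply, Matrix.mulVec, dotProduct, mat]

lemma mat_one : mat 1 = 1 := by
  ext i j
  show vec (FreeGroup.of j) i = _
  rw [vec_of]
  simp [Pi.single_apply, Matrix.one_apply, eq_comm]

lemma mat_pow (α : MulAut F4) (n : ℕ) : mat (α ^ n) = (mat α) ^ n := by
  induction n with
  | zero => simpa using mat_one
  | succ m ih => rw [pow_succ, pow_succ, ← ih, ← mat_mul]

/-- the abelianized matrix of φₖ -/
def Fm (K : ℤ) : Matrix (Fin 4) (Fin 4) ℤ := !![1,1,K,0; 0,1,0,0; 0,0,1,1; 0,0,0,1]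

def Nm (K : ℤ) : Matrix (Fin 4) (Fin 4) ℤ := !![0,1,K,0; 0,0,0,0; 0,0,0,1; 0,0,0,0]

lemma Fm_eq (K : ℤ) : Fm K = 1 + Nm K := by
  ext i j
  fin_cases i <;> fin_cases j <;>
    simp [Fm, Nm, Matrix.one_apply, Matrix.vecHead, Matrix.vecTail]

lemma Nm_sq (K : ℤ) : Nm K * Nm K = !![0,0,0,K; 0,0,0,0; 0,0,0,0; 0,0,0,0] := by
  ext i j
  fin_cases i <;> fin_cases j <;>
    simp [Nm, Matrix.mul_apply, Fin.sum_univ_four, Matrix.vecHead, Matrix.vecTail]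

lemma Nm_cube (K : ℤ) : Nm K * (Nm K * Nm K) = 0 := by
  rw [Nm_sq]
  ext i j
  fin_cases i <;> fin_cases j <;>
    simp [Nm, Matrix.mul_apply, Fin.sum_univ_four, Matrix.vecHead, Matrix.vecTail]

lemma Nm_cube' (K : ℤ) : (Nm K * Nm K) * Nm K = 0 := by
  rw [Nm_sq]
  ext i j
  fin_cases i <;> fin_cases j <;>
    simp [Nm, Matrix.mul_apply, Fin.sum_univ_four, Matrix.vecHead, Matrix.vecTail]

lemma Nm_four (K : ℤ) : (Nm K * Nm K) * (Nm K * Nm K) = 0 := by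
  rw [← mul_assoc, Nm_cube', zero_mul]

lemma mat_eq_Fm (K : ℤ) (kk : ℕ) (hK : K = (kk : ℤ) + 1) (α : MulAut F4)
    (hαa : α a = a) (hαb : α b = b * a) (hαc : α c = c * a ^ (kk + 1)) (hαd : α d = d * c) :
    mat α = Fm K := by
  have h0 : α (FreeGroup.of (0 : Fin 4)) = a := hαa
  have h1 : α (FreeGroup.of (1 : Fin 4)) = b * a := hαb
  have h2 : α (FreeGroup.of (2 : Fin 4)) = c * a ^ (kk + 1) := hαc
  have h3 : α (FreeGroup.of (3 : Fin 4)) = d * c := hαd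
  have va : vec a = Pi.single 0 1 := vec_of 0
  have vb : vec b = Pi.single 1 1 := vec_of 1
  have vc : vec c = Pi.single 2 1 := vec_of 2
  have vd : vec d = Pi.single 3 1 := vec_of 3
  ext i j
  show vec (α (FreeGroup.of j)) i = Fm K i j
  fin_cases j
  · show vec (α (FreeGroup.of 0)) i = Fm K i 0
    rw [h0, va]
    fin_cases i <;>
      simp [Fm, Pi.single_apply, Matrix.vecHead, Matrix.vecTail]
  · show vec (α (FreeGroup.of 1)) i = Fm K i 1
    rw [h1, vec_mul, va, vb]
    fin_cases i <;>
      simp [Fm, Pi.single_apply, Matrix.vecHead, Matrix.vecTail]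
  · show vec (α (FreeGroup.of 2)) i = Fm K i 2
    rw [h2, vec_mul, vec_pow, va, vc, hK]
    fin_cases i <;>
      simp [Fm, Pi.single_apply, Matrix.vecHead, Matrix.vecTail]
  · show vec (α (FreeGroup.of 3)) i = Fm K i 3
    rw [h3, vec_mul, vc, vd]
    fin_cases i <;>
      simp [Fm, Pi.single_apply, Matrix.vecHead, Matrix.vecTail]

lemma Fm_pow (K : ℤ) (n : ℕ) : ∃ cc : ℤ,
    (Fm K) ^ n = 1 + (n : ℤ) • Nm K + cc • (Nm K * Nm K) := by
  induction n with
  | zero => exact ⟨0, by simp⟩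
  | succ m ih =>
    obtain ⟨cc, hcc⟩ := ih
    refine ⟨cc + m, ?_⟩
    rw [pow_succ, hcc, Fm_eq]
    have h3' := Nm_cube' K
    rw [mul_add, mul_one, add_mul, add_mul, one_mul, smul_mul_assoc, smul_mul_assoc, h3',
      smul_zero, add_zero]
    push_cast
    module


set_option maxHeartbeats 2000000 in
lemma key (p p' : ℕ) (hp : 1 ≤ p) (hp' : 1 ≤ p') (K K' : ℤ) (hK : 1 ≤ K) (hK' : 1 ≤ K')
    (U W : Matrix (Fin 4) (Fin 4) ℤ) (hUW : U * W = 1) (hWU : W * U = 1)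
    (hmain : U * (Fm K) ^ p = (Fm K') ^ p' * U) :
    (p : ℤ) = (p' : ℤ) ∧ K = K' := by
  obtain ⟨cc, hP⟩ := Fm_pow K p
  obtain ⟨cc', hP'⟩ := Fm_pow K' p'
  set X : Matrix (Fin 4) (Fin 4) ℤ :=
    !![0,(p:ℤ),(p:ℤ)*K,cc*K; 0,0,0,0; 0,0,0,(p:ℤ); 0,0,0,0] with hX
  set X' : Matrix (Fin 4) (Fin 4) ℤ :=
    !![0,(p':ℤ),(p':ℤ)*K',cc'*K'; 0,0,0,0; 0,0,0,(p':ℤ); 0,0,0,0] with hX'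
  have hXe : (Fm K) ^ p = 1 + X := by
    rw [hP, Nm_sq, add_assoc]
    congr 1
    ext i j
    fin_cases i <;> fin_cases j <;>
      simp [hX, Nm, Matrix.vecHead, Matrix.vecTail, mul_comm]
  have hXe' : (Fm K') ^ p' = 1 + X' := by
    rw [hP', Nm_sq, add_assoc]
    congr 1
    ext i j
    fin_cases i <;> fin_cases j <;>
      simp [hX', Nm, Matrix.vecHead, Matrix.vecTail, mul_comm]
  have E1 : X' * U = U * X := by
    rw [hXe, hXe', mul_add, mul_one, add_mul, one_mul] at hmain
    exact (add_left_cancel hmain).symm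
  have XX : X * X = !![0,0,0,(p:ℤ)*(p:ℤ)*K; 0,0,0,0; 0,0,0,0; 0,0,0,0] := by
    ext i j
    fin_cases i <;> fin_cases j <;>
      · simp [hX, Matrix.mul_apply, Fin.sum_univ_four, Matrix.vecHead, Matrix.vecTail]
        try ring
  have XX' : X' * X' = !![0,0,0,(p':ℤ)*(p':ℤ)*K'; 0,0,0,0; 0,0,0,0; 0,0,0,0] := by
    ext i j
    fin_cases i <;> fin_cases j <;>
      · simp [hX', Matrix.mul_apply, Fin.sum_univ_four, Matrix.vecHead, Matrix.vecTail]
        try ring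
  have E2 : (X' * X') * U = U * (X * X) := by
    calc X' * X' * U = X' * (X' * U) := by rw [mul_assoc]
      _ = X' * (U * X) := by rw [E1]
      _ = (X' * U) * X := by rw [mul_assoc]
      _ = (U * X) * X := by rw [E1]
      _ = U * (X * X) := by rw [mul_assoc]
  rw [XX, XX'] at E2
  have r2 := fun (i j : Fin 4) => congrFun (congrFun E2 i) j
  have r1 := fun (i j : Fin 4) => congrFun (congrFun E1 i) j
  have g13 := r2 1 3
  have g23 := r2 2 3
  have g33 := r2 3 3
  have g01 := r2 0 1
  have g02 := r2 0 2
  have g03 := r2 0 3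
  have f13 := r1 1 3
  have f23 := r1 2 3
  have f02 := r1 0 2
  simp [Matrix.mul_apply, Fin.sum_univ_four, Matrix.vecHead, Matrix.vecTail] at g13 g23 g33 g01 g02 g03
  have z10 : U 1 0 = 0 := g13.resolve_right (by omega)
  have z20 : U 2 0 = 0 := g23.resolve_right (by omega)
  have z30 : U 3 0 = 0 := g33.resolve_right (by omega)
  have z31 : U 3 1 = 0 := g01.resolve_left (by omega)
  have z32 : U 3 2 = 0 := g02.resolve_left (by omega)
  simp [hX, hX', z10, z20, z30, z31, z32, Matrix.mul_apply, Fin.sum_univ_four,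
    Matrix.vecHead, Matrix.vecTail] at f13 f23 f02
  have z12 : U 1 2 = 0 := f13.resolve_right (by omega)
  rw [z12] at f02
  simp at f02
  have hdetU : IsUnit U.det :=
    IsUnit.of_mul_eq_one (a := U.det) W.det (by rw [← Matrix.det_mul, hUW, Matrix.det_one])
  have hdet : U.det = (U 0 0 * U 1 1) * (U 2 2 * U 3 3) := by
    have hU : U = !![U 0 0, U 0 1, U 0 2, U 0 3; 0, U 1 1, 0, U 1 3;
        0, U 2 1, U 2 2, U 2 3; 0, 0, 0, U 3 3] := by
      ext i j
      fin_cases i <;> fin_cases j <;>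
        simp [z10, z12, z20, z30, z31, z32, Matrix.vecHead, Matrix.vecTail]
    rw [hU]
    simp [Matrix.det_succ_row_zero, Fin.sum_univ_succ, Matrix.vecHead, Matrix.vecTail]
    ring
  rw [hdet] at hdetU
  have u00 : U 0 0 = 1 ∨ U 0 0 = -1 :=
    Int.isUnit_iff.mp (isUnit_of_mul_isUnit_left (isUnit_of_mul_isUnit_left hdetU))
  have u22 : U 2 2 = 1 ∨ U 2 2 = -1 :=
    Int.isUnit_iff.mp (isUnit_of_mul_isUnit_left (isUnit_of_mul_isUnit_right hdetU))
  have u33 : U 3 3 = 1 ∨ U 3 3 = -1 :=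
    Int.isUnit_iff.mp (isUnit_of_mul_isUnit_right (isUnit_of_mul_isUnit_right hdetU))
  have hp0 : (0:ℤ) < (p:ℤ) := by exact_mod_cast hp
  have hp0' : (0:ℤ) < (p':ℤ) := by exact_mod_cast hp'
  have hpp : (p:ℤ) = (p':ℤ) := by
    rcases u22 with h22 | h22 <;> rcases u33 with h33 | h33 <;> rw [h22, h33] at f23 <;>
      simp at f23 <;> omega
  refine ⟨hpp, ?_⟩
  rw [← hpp] at f02
  rcases u22 with h22 | h22 <;> rcases u00 with h00 | h00 <;> rw [h22, h00] at f02 <;>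
    simp at f02 <;>
    first
      | omega
      | nlinarith [mul_pos hp0 (lt_of_lt_of_le zero_lt_one hK),
          mul_pos hp0 (lt_of_lt_of_le zero_lt_one hK'), f02]

/-- Let φₖ (resp. φₖ') be the automorphism of F₄ with a↦a, b↦ba, c↦ca^{k+1}, d↦dc.
    If φₖ^p is conjugate in Aut(F₄) to φₖ'^{p'} (p, p' ≥ 1), then k = k' and p = p'. -/
theorem stmt_10 (k k' p p' : ℕ) (hp : 1 ≤ p) (hp' : 1 ≤ p')
    (α β : MulAut F4)
    (hαa : α a = a) (hαb : α b = b * a) (hαc : α c = c * a ^ (k + 1)) (hαd : α d = d * c)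
    (hβa : β a = a) (hβb : β b = b * a) (hβc : β c = c * a ^ (k' + 1)) (hβd : β d = d * c)
    (h : IsConj (α ^ p) (β ^ p')) :
    k = k' ∧ p = p' := by
  obtain ⟨ψ, hψ⟩ := isConj_iff.mp h
  have hmα := mat_eq_Fm ((k : ℤ) + 1) k rfl α hαa hαb hαc hαd
  have hmβ := mat_eq_Fm ((k' : ℤ) + 1) k' rfl β hβa hβb hβc hβd
  have hU : mat ψ * mat ψ⁻¹ = 1 := by
    rw [← mat_mul, mul_inv_cancel]
    exact mat_one
  have hW : mat ψ⁻¹ * mat ψ = 1 := by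
    rw [← mat_mul, inv_mul_cancel]
    exact mat_one
  have hconj : mat ψ * Fm ((k : ℤ) + 1) ^ p * mat ψ⁻¹ = Fm ((k' : ℤ) + 1) ^ p' := by
    have := congrArg mat hψ
    rw [mat_mul, mat_mul, mat_pow, mat_pow, hmα, hmβ] at this
    exact this
  have hmain : mat ψ * Fm ((k : ℤ) + 1) ^ p = Fm ((k' : ℤ) + 1) ^ p' * mat ψ := by
    calc mat ψ * Fm ((k : ℤ) + 1) ^ p
        = mat ψ * Fm ((k : ℤ) + 1) ^ p * (mat ψ⁻¹ * mat ψ) := by rw [hW, mul_one]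
      _ = (mat ψ * Fm ((k : ℤ) + 1) ^ p * mat ψ⁻¹) * mat ψ := by
          rw [mul_assoc, mul_assoc, mul_assoc]
      _ = Fm ((k' : ℤ) + 1) ^ p' * mat ψ := by rw [hconj]
  obtain ⟨h1, h2⟩ := key p p' hp hp' ((k : ℤ) + 1) ((k' : ℤ) + 1) (by omega) (by omega)
    (mat ψ) (mat ψ⁻¹) hU hW hmain
  exact ⟨by omega, by omega⟩

end Stmt10
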